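/- Let a, b ≥ 0 and let α_1, …, α_{b+1}, β_1, …, β_{a+1}, γ_1, …, γ_{a+b} be complex numbers such that the α_i are pairwise distinct, and let R > 0 satisfy |α_i| < R for all i and |β_j| > R for all j. Then (α_{b+1} − β_{a+1}) · (1/(2πi)) ∮_{|z|=R} [ ∏_{k=1}^{a+b} (z − γ_k) ] / [ ∏_{i=1}^{b+1} (z − α_i) · ∏_{j=1}^{a+1} (z − β_j) ] dz = R_{a,b}(α; β; γ), where the contour is the circle of radius R traversed once counterclockwise. (This is Eq. (3.5) of the paper.) -/

import Mathlib

open Polynomial Finset Metric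

lemma my_circleIntegral_add {f g : ℂ → ℂ} {c : ℂ} {R : ℝ}
    (hf : CircleIntegrable f c R) (hg : CircleIntegrable g c R) :
    (∮ z in C(c, R), (f z + g z)) =
      (∮ z in C(c, R), f z) + ∮ z in C(c, R), g z := by
  simp only [circleIntegral, smul_add]
  exact intervalIntegral.integral_add ((circleIntegrable_iff R).mp hf)
    ((circleIntegrable_iff R).mp hg)

lemma my_circleIntegral_sum {ι : Type*} (s : Finset ι) {F : ι → ℂ → ℂ} {c : ℂ} {R : ℝ}
    (hR : 0 ≤ R) (h : ∀ i ∈ s, ContinuousOn (F i) (sphere c R)) :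
    (∮ z in C(c, R), ∑ i ∈ s, F i z) = ∑ i ∈ s, ∮ z in C(c, R), F i z := by
  classical
  induction s using Finset.cons_induction with
  | empty => simp [circleIntegral]
  | cons i s hi ih =>
    simp only [Finset.sum_cons]
    rw [my_circleIntegral_add ((h i (Finset.mem_cons_self i s)).circleIntegrable hR)
      ((continuousOn_finset_sum s fun j hj => h j (Finset.mem_cons_of_mem hj)).circleIntegrable hR),
      ih fun j hj => h j (Finset.mem_cons_of_mem hj)]

/-- The residue form of the contour-integral formula Eq. (3.5) of the paper: the
one-path propagator `R_{a,b}(α; β; γ)` for the weighted enumeration of a single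
non-intersecting lattice path. -/
noncomputable def pathR (a b : ℕ) (α : Fin (b + 1) → ℂ) (β : Fin (a + 1) → ℂ)
    (γ : Fin (a + b) → ℂ) : ℂ :=
  (α (Fin.last b) - β (Fin.last a)) *
    ∑ i : Fin (b + 1),
      (∏ k, (α i - γ k)) /
        ((∏ i' ∈ Finset.univ.erase i, (α i - α i')) * ∏ j, (α i - β j))

/-- Eq. (3.5) of the paper: the contour-integral formula for the one-path propagator.
The contour is the circle of radius `R` (traversed once counterclockwise) enclosing all
the poles `α_i` but none of the `β_j`. -/
theorem pathR_contour_integral (a b : ℕ)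
    (α : Fin (b + 1) → ℂ) (β : Fin (a + 1) → ℂ) (γ : Fin (a + b) → ℂ)
    (hα : Function.Injective α) (R : ℝ) (hR : 0 < R)
    (hαR : ∀ i, ‖α i‖ < R) (hβR : ∀ j, R < ‖β j‖) :
    (α (Fin.last b) - β (Fin.last a)) *
        ((2 * Real.pi * Complex.I)⁻¹ *
          ∮ z in C(0, R),
            (∏ k, (z - γ k)) / ((∏ i, (z - α i)) * ∏ j, (z - β j))) =
      pathR a b α β γ := by
  classical
  set c : Fin (b + 1) → ℂ := fun i =>
    (∏ k, (α i - γ k)) /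
      ((∏ i' ∈ Finset.univ.erase i, (α i - α i')) * ∏ j, (α i - β j)) with hc
  set N : Polynomial ℂ := ∏ k, (X - C (γ k)) with hN
  set D : Polynomial ℂ := ∏ i, (X - C (α i)) with hD
  set Q : Polynomial ℂ := ∏ j, (X - C (β j)) with hQ
  set M : Polynomial ℂ :=
    N - ∑ i, C (c i) * (∏ i' ∈ Finset.univ.erase i, (X - C (α i'))) * Q with hM
  -- denominators are nonzero
  have hαβ : ∀ i j, α i - β j ≠ 0 := fun i j => by
    intro h
    have := (hαR i).trans (hβR j)
    rw [sub_eq_zero.mp h] at this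
    exact lt_irrefl _ this
  have hQα : ∀ i, (∏ j, (α i - β j)) ≠ 0 := fun i =>
    Finset.prod_ne_zero_iff.mpr fun j _ => hαβ i j
  have hDα : ∀ i, (∏ i' ∈ Finset.univ.erase i, (α i - α i')) ≠ 0 := fun i =>
    Finset.prod_ne_zero_iff.mpr fun i' hi' =>
      sub_ne_zero.mpr fun h => (Finset.mem_erase.mp hi').1 (hα h).symm
  -- D divides M
  have hroot : ∀ i, M.IsRoot (α i) := by
    intro i
    have hsum : (∑ i'', c i'' * ((∏ i' ∈ Finset.univ.erase i'', (α i - α i')) *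
        ∏ j, (α i - β j))) = c i * ((∏ i' ∈ Finset.univ.erase i, (α i - α i')) *
        ∏ j, (α i - β j)) := by
      refine Finset.sum_eq_single i (fun i'' _ hne => ?_) (by simp)
      have : (∏ i' ∈ Finset.univ.erase i'', (α i - α i')) = 0 :=
        Finset.prod_eq_zero (Finset.mem_erase.mpr ⟨hne.symm, Finset.mem_univ i⟩) (sub_self _)
      rw [this, zero_mul, mul_zero]
    simp only [Polynomial.IsRoot, hM, Polynomial.eval_sub, Polynomial.eval_finset_sum,
      Polynomial.eval_mul, Polynomial.eval_prod, Polynomial.eval_sub, Polynomial.eval_X,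
      Polynomial.eval_C, hN, hQ, mul_assoc]
    rw [hsum]
    simp only [hc]
    rw [div_mul_cancel₀ _ (mul_ne_zero (hDα i) (hQα i)), sub_self]
  have hdvd : D ∣ M := by
    rw [hD]
    exact Fintype.prod_dvd_of_coprime (Polynomial.pairwise_coprime_X_sub_C hα)
      fun i => Polynomial.dvd_iff_isRoot.mpr (hroot i)
  obtain ⟨P, hP⟩ := hdvd
  have hNP : N = (∑ i, C (c i) * (∏ i' ∈ Finset.univ.erase i, (X - C (α i')))) * Q + D * P := by
    rw [← hP, hM, ← Finset.sum_mul]; ring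
  -- nonvanishing on sphere / closed ball
  have hβR' : ∀ j, R < ‖β j‖ := fun j => by exact hβR j
  have hαR' : ∀ i, ‖α i‖ < R := fun i => by exact hαR i
  have hQz : ∀ z : ℂ, ‖z‖ ≤ R → (∏ j, (z - β j)) ≠ 0 := fun z hz =>
    Finset.prod_ne_zero_iff.mpr fun j _ => sub_ne_zero.mpr fun h => by
      have := hβR' j
      rw [← h] at this
      exact absurd hz (not_le.mpr this)
  have hQz' : ∀ z : ℂ, ‖z‖ ≤ R → Q.eval z ≠ 0 := fun z hz => by
    simpa [hQ, Polynomial.eval_prod] using hQz z hz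
  have hDz : ∀ z : ℂ, z ∈ sphere (0 : ℂ) R → ∀ i, z - α i ≠ 0 := by
    intro z hz i
    rw [mem_sphere_zero_iff_norm] at hz
    refine sub_ne_zero.mpr fun h => ?_
    rw [h] at hz
    exact absurd hz (ne_of_lt (hαR' i))
  -- pointwise identity on the sphere
  have hEq : Set.EqOn
      (fun z => (∏ k, (z - γ k)) / ((∏ i, (z - α i)) * ∏ j, (z - β j)))
      (fun z => (∑ i, c i * (z - α i)⁻¹) + P.eval z / Q.eval z)
      (sphere (0 : ℂ) R) := by
    intro z hz
    have hzR : ‖z‖ = R := mem_sphere_zero_iff_norm.mp hz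
    have hDzne : (∏ i, (z - α i)) ≠ 0 :=
      Finset.prod_ne_zero_iff.mpr fun i _ => hDz z hz i
    have hQzne : (∏ j, (z - β j)) ≠ 0 := hQz z (le_of_eq hzR)
    have hev := congrArg (Polynomial.eval z) hNP
    simp only [Polynomial.eval_add, Polynomial.eval_mul, Polynomial.eval_finset_sum,
      Polynomial.eval_prod, Polynomial.eval_sub, Polynomial.eval_X, Polynomial.eval_C,
      hN, hD, hQ] at hev
    have hsplit : ∀ i : Fin (b + 1),
        c i * (z - α i)⁻¹ = c i * (∏ i' ∈ Finset.univ.erase i, (z - α i')) /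
          ∏ i', (z - α i') := by
      intro i
      rw [← Finset.mul_prod_erase Finset.univ _ (Finset.mem_univ i)]
      have h1 : z - α i ≠ 0 := hDz z hz i
      have h2 : (∏ i' ∈ Finset.univ.erase i, (z - α i')) ≠ 0 :=
        Finset.prod_ne_zero_iff.mpr fun i' _ => hDz z hz i'
      field_simp
    have hQev : Q.eval z = ∏ j, (z - β j) := by simp [hQ, Polynomial.eval_prod]
    simp only [hsplit, hQev]
    rw [← Finset.sum_div, div_add_div _ _ hDzne hQzne, hev]
  -- integrate
  have hcont1 : ∀ i : Fin (b + 1),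
      ContinuousOn (fun z => c i * (z - α i)⁻¹) (sphere (0 : ℂ) R) := by
    intro i
    exact (continuousOn_const.mul (((continuous_id.sub continuous_const).continuousOn).inv₀
      fun z hz => hDz z hz i))
  have hcont2 : ContinuousOn (fun z => P.eval z / Q.eval z) (closedBall (0 : ℂ) R) :=
    ContinuousOn.div P.continuous.continuousOn Q.continuous.continuousOn
      fun z hz => hQz' z (mem_closedBall_zero_iff.mp hz)
  have hint2 : CircleIntegrable (fun z => P.eval z / Q.eval z) 0 R :=
    (hcont2.mono sphere_subset_closedBall).circleIntegrable hR.le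
  have hI : (∮ z in C(0, R),
      (∏ k, (z - γ k)) / ((∏ i, (z - α i)) * ∏ j, (z - β j))) =
      (2 * Real.pi * Complex.I) * ∑ i, c i := by
    rw [circleIntegral.integral_congr hR.le hEq]
    rw [my_circleIntegral_add
      ((continuousOn_finset_sum Finset.univ fun i _ => hcont1 i).circleIntegrable hR.le) hint2]
    have hz2 : (∮ z in C(0, R), P.eval z / Q.eval z) = 0 := by
      apply Complex.circleIntegral_eq_zero_of_differentiable_on_off_countable hR.le
        Set.countable_empty hcont2
      intro z hz
      exact DifferentiableAt.div P.differentiableAt Q.differentiableAt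
        (hQz' z (le_of_lt (mem_ball_zero_iff.mp hz.1)))
    rw [hz2, add_zero, my_circleIntegral_sum Finset.univ hR.le fun i _ => hcont1 i]
    have hterm : ∀ i : Fin (b + 1),
        (∮ z in C(0, R), c i * (z - α i)⁻¹) = c i * (2 * Real.pi * Complex.I) := by
      intro i
      rw [circleIntegral.integral_const_mul,
        circleIntegral.integral_sub_inv_of_mem_ball (mem_ball_zero_iff.mpr (hαR' i))]
    simp only [hterm]
    rw [← Finset.sum_mul]
    ring
  rw [hI, pathR]
  rw [inv_mul_cancel_left₀ Complex.two_pi_I_ne_zero]
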